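/- arXiv:1410.2666 — 4 statements merged into one kernel-verified Lean document; each statement's English description precedes it below -/
import Mathlib

section
/- For every θ ∈ ℝ and all z₁, z₂, z₃, z₄ ∈ ℂ satisfying the four equations (z₁ − z₄)·e^{iθ} + z₄ = z₂, (z₃ − z₂)·e^{iθ} + z₂ = z₄, (z₃ − z₁)·e^{iθ} + z₁ = z₂, and (z₁ − z₃)·e^{iθ} + z₃ = z₄, one has z₁ = z₂ = z₃ = z₄. -/
open Complex

theorem figure_eight_not_colorable (θ : ℝ) (z₁ z₂ z₃ z₄ : ℂ)
    (h1 : (z₁ - z₄) * Complex.exp (θ * Complex.I) + z₄ = z₂)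
    (h2 : (z₃ - z₂) * Complex.exp (θ * Complex.I) + z₂ = z₄)
    (h3 : (z₃ - z₁) * Complex.exp (θ * Complex.I) + z₁ = z₂)
    (h4 : (z₁ - z₃) * Complex.exp (θ * Complex.I) + z₃ = z₄) :
    z₁ = z₂ ∧ z₂ = z₃ ∧ z₃ = z₄ := by
  set e : ℂ := Complex.exp (θ * Complex.I) with hE
  have habs : e * (starRingEnd ℂ) e = 1 := by
    rw [Complex.mul_conj]
    have h1 : ‖e‖ = 1 := Complex.norm_exp_ofReal_mul_I θ
    have : Complex.normSq e = 1 := by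
      rw [← Complex.sq_norm, h1]; norm_num
    rw [this]; norm_num
  have hne : e ^ 2 - 3 * e + 1 ≠ 0 := by
    intro h0
    have h5 : e + (starRingEnd ℂ) e = 3 := by
      linear_combination (starRingEnd ℂ) e * h0 + (3 - e) * habs
    rw [Complex.add_conj] at h5
    have h7 : (2 * e.re : ℝ) = 3 := by exact_mod_cast h5
    have h8 : e.re = Real.cos θ := Complex.exp_ofReal_mul_I_re θ
    have := Real.cos_le_one θ
    nlinarith [h8 ▸ h7]
  have key1 : (e ^ 2 - 3 * e + 1) * (z₄ - z₁) = 0 := by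
    linear_combination (2 - e) * h1 + h2 - h3
  have key2 : (e ^ 2 - 3 * e + 1) * (z₂ - z₁) = 0 := by
    linear_combination h1 + (1 - e) * h2 + (e - 1) * h3
  have hq : z₄ - z₁ = 0 := by
    rcases mul_eq_zero.mp key1 with h | h
    · exact absurd h hne
    · exact h
  have hp : z₂ - z₁ = 0 := by
    rcases mul_eq_zero.mp key2 with h | h
    · exact absurd h hne
    · exact h
  have hS : z₁ + z₃ = z₂ + z₄ := by linear_combination h3 + h4
  exact ⟨by linear_combination -hp, by linear_combination -hS - hq,
    by linear_combination hS + hp⟩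
end

section
/- Let p, q ≥ 2 be coprime integers, let 1 ≤ k ≤ p − 1 and 1 ≤ l ≤ q − 1 be integers, and set θ(p,k;q,l) = π·((p − 2k)/p − (q − 2l)/q). Then there exists a non-constant function z : ℤ × ℤ → ℂ which is periodic with period q in the first variable and with period p in the second variable, such that for all i, j ∈ ℤ: z(i + 1, j − 1) = (z(i, j) − z(i, 0))·e^{iθ(p,k;q,l)} + z(i, 0). -/
open Complex

/-- If `1 ≤ m ≤ n - 1`, then `exp((2π m / n) I) ≠ 1`. -/
lemma aux_exp_ne_one (m n : ℤ) (hn : 2 ≤ n) (hm1 : 1 ≤ m) (hm2 : m ≤ n - 1) :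
    Complex.exp (((2 * Real.pi * m / n : ℝ) : ℂ) * Complex.I) ≠ 1 := by
  intro h
  rw [Complex.exp_eq_one_iff] at h
  obtain ⟨t, ht⟩ := h
  have hI : (Complex.I : ℂ) ≠ 0 := Complex.I_ne_zero
  have ht' : ((2 * Real.pi * m / n : ℝ) : ℂ) = ((t * (2 * Real.pi) : ℝ) : ℂ) := by
    apply mul_right_cancel₀ hI
    rw [ht]; push_cast; ring
  have htr : 2 * Real.pi * m / n = t * (2 * Real.pi) := by exact_mod_cast ht'
  have hn0 : (n : ℝ) ≠ 0 := by
    have : (0:ℤ) < n := by omega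
    exact_mod_cast this.ne'
  have hpi : Real.pi ≠ 0 := Real.pi_ne_zero
  have h2pi : (2 * Real.pi) ≠ 0 := by positivity
  have hmn : (m : ℝ) = t * n := by
    apply mul_left_cancel₀ h2pi
    field_simp at htr
    linear_combination (2 * Real.pi) * htr
  have hmn' : m = t * n := by exact_mod_cast hmn
  have h0t : 0 < t := by nlinarith
  have ht1 : t < 1 := by nlinarith
  omega

theorem torus_knot_trochoid_coloring (p q k l : ℤ)
    (hp : 2 ≤ p) (hq : 2 ≤ q) (hpq : IsCoprime p q)
    (hk1 : 1 ≤ k) (hk2 : k ≤ p - 1) (hl1 : 1 ≤ l) (hl2 : l ≤ q - 1) :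
    ∃ z : ℤ → ℤ → ℂ,
      (∃ i j i' j', z i j ≠ z i' j') ∧
      (∀ i j, z (i + q) j = z i j) ∧
      (∀ i j, z i (j + p) = z i j) ∧
      (∀ i j, z (i + 1) (j - 1) =
        (z i j - z i 0) *
          Complex.exp ((Real.pi * (((p : ℝ) - 2 * k) / p - ((q : ℝ) - 2 * l) / q) : ℝ) * Complex.I)
        + z i 0) := by
  have hp0 : (p : ℝ) ≠ 0 := by
    have : (0:ℤ) < p := by omega
    exact_mod_cast this.ne'
  have hq0 : (q : ℝ) ≠ 0 := by
    have : (0:ℤ) < q := by omega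
    exact_mod_cast this.ne'
  have hp0' : (p : ℂ) ≠ 0 := by exact_mod_cast hp0
  have hq0' : (q : ℂ) ≠ 0 := by exact_mod_cast hq0
  set c : ℂ := ((2 * Real.pi * l / q : ℝ) : ℂ) * Complex.I with hc
  set d : ℂ := ((2 * Real.pi * k / p : ℝ) : ℂ) * Complex.I with hd
  refine ⟨fun i j => Complex.exp ((i : ℂ) * c) * (1 - Complex.exp (c - d)) +
      (Complex.exp c - 1) * Complex.exp ((i : ℂ) * c + (j : ℂ) * d), ?_, ?_, ?_, ?_⟩
  · -- non-constant
    refine ⟨0, 0, 0, 1, ?_⟩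
    simp only [Int.cast_zero, Int.cast_one, zero_mul, zero_add, Complex.exp_zero, one_mul,
      add_zero, one_mul]
    intro h
    have hcne : Complex.exp c ≠ 1 := aux_exp_ne_one l q hq hl1 hl2
    have hdne : Complex.exp d ≠ 1 := aux_exp_ne_one k p hp hk1 hk2
    apply hcne
    have h2 : (Complex.exp c - 1) * (1 - Complex.exp d) = 0 := by
      linear_combination h
    rcases mul_eq_zero.mp h2 with h3 | h3
    · linear_combination h3
    · exact absurd (by linear_combination -h3) hdne
  · -- period q in first variable
    have hq1 : Complex.exp ((q : ℂ) * c) = 1 := by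
      have : (q : ℂ) * c = (l : ℤ) * (2 * (Real.pi : ℂ) * Complex.I) := by
        rw [hc]; push_cast; field_simp
      rw [this, Complex.exp_int_mul_two_pi_mul_I]
    intro i j
    simp only [Int.cast_add]
    rw [show ((i:ℂ) + q) * c + (j:ℂ) * d = (q:ℂ) * c + ((i:ℂ) * c + (j:ℂ) * d) by ring,
      show ((i:ℂ) + q) * c = (q:ℂ) * c + (i:ℂ) * c by ring,
      Complex.exp_add, Complex.exp_add, hq1, one_mul, one_mul]
  · -- period p in second variable
    have hp1 : Complex.exp ((p : ℂ) * d) = 1 := by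
      have : (p : ℂ) * d = (k : ℤ) * (2 * (Real.pi : ℂ) * Complex.I) := by
        rw [hd]; push_cast; field_simp
      rw [this, Complex.exp_int_mul_two_pi_mul_I]
    intro i j
    simp only [Int.cast_add]
    rw [show (i:ℂ) * c + ((j:ℂ) + p) * d = (p:ℂ) * d + ((i:ℂ) * c + (j:ℂ) * d) by ring,
      Complex.exp_add, hp1, one_mul]
  · -- crossing relation
    intro i j
    have hreal : Real.pi * (((p : ℝ) - 2 * k) / p - ((q : ℝ) - 2 * l) / q)
        = 2 * Real.pi * l / q - 2 * Real.pi * k / p := by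
      field_simp; ring
    have hw : ((Real.pi * (((p : ℝ) - 2 * k) / p - ((q : ℝ) - 2 * l) / q) : ℝ) : ℂ) * Complex.I
        = c - d := by
      rw [hc, hd, ← sub_mul, ← Complex.ofReal_sub, hreal]
    rw [hw]
    simp only [Int.cast_add, Int.cast_sub, Int.cast_one, Int.cast_zero, zero_mul, add_zero]
    rw [show ((i:ℂ) + 1) * c + ((j:ℂ) - 1) * d = (((i:ℂ) * c + (j:ℂ) * d) + c) - d by ring,
      show ((i:ℂ) + 1) * c = (i:ℂ) * c + c by ring]
    simp only [Complex.exp_sub, Complex.exp_add]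
    field_simp
    ring
end

section
/- Let p, q ≥ 2 be coprime integers and set θ(p,k;q,l) = π·((p − 2k)/p − (q − 2l)/q) for integers 1 ≤ k ≤ p − 1 and 1 ≤ l ≤ q − 1. Then in ℂ[X] one has the polynomial identity (X^{pq} − 1)·(X − 1) = (X^p − 1)·(X^q − 1)·∏_{k=1}^{p−1} ∏_{l=1}^{q−1} (X − exp(iθ(p,k;q,l))). Equivalently, the Alexander polynomial Δ_{T(p,q)}(t) = (t^{pq} − 1)(t − 1)/((t^p − 1)(t^q − 1)) of the (p, q)-torus knot factors completely as ∏_{k=1}^{p−1} ∏_{l=1}^{q−1} (t − exp(iθ(p,k;q,l))). -/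
open Complex Polynomial

lemma prod_range_pow (n : ℕ) (hn : 0 < n) {ζ : ℂ} (hζ : IsPrimitiveRoot ζ n) :
    (X : ℂ[X]) ^ n - 1 = ∏ m ∈ Finset.range n, (X - C (ζ ^ m)) := by
  rw [X_pow_sub_one_eq_prod hn hζ]
  have h1 : (Finset.range n).image (ζ ^ ·) ⊆ Polynomial.nthRootsFinset n (1 : ℂ) := by
    intro x hx
    simp only [Finset.mem_image] at hx
    obtain ⟨m, hm, rfl⟩ := hx
    rw [Polynomial.mem_nthRootsFinset hn, ← pow_mul, mul_comm, pow_mul, hζ.pow_eq_one, one_pow]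
  have h2 : Polynomial.nthRootsFinset n (1 : ℂ) = (Finset.range n).image (ζ ^ ·) := by
    refine (Finset.eq_of_subset_of_card_le h1 ?_).symm
    rw [hζ.card_nthRootsFinset, Finset.card_image_of_injOn hζ.injOn_pow, Finset.card_range]
  rw [h2, Finset.prod_image fun a ha b hb h => hζ.injOn_pow (by simpa using ha) (by simpa using hb) h]

-- cast of a mod-n value into ZMod p when p ∣ n
lemma cast_mod_zmod {p n : ℕ} (hpn : p ∣ n) (v : ℕ) : ((v % n : ℕ) : ZMod p) = (v : ZMod p) := by
  conv_rhs => rw [← Nat.div_add_mod v n]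
  obtain ⟨c, rfl⟩ := hpn
  push_cast
  simp [ZMod.natCast_self]


lemma zmod_cancel_help {p q k1 k2 : ℕ} (hp : 0 < p) (hpq : Nat.Coprime q p)
    (hk1 : k1 < p) (hk2 : k2 < p) (h : (k1 : ZMod p) * q = (k2 : ZMod p) * q) : k1 = k2 := by
  haveI : NeZero p := ⟨hp.ne'⟩
  have hu : IsUnit (q : ZMod p) := ⟨ZMod.unitOfCoprime q hpq, ZMod.coe_unitOfCoprime q hpq⟩
  have h2 := hu.mul_right_cancel h
  calc k1 = (k1 : ZMod p).val := (ZMod.val_cast_of_lt hk1).symm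
    _ = (k2 : ZMod p).val := by rw [h2]
    _ = k2 := ZMod.val_cast_of_lt hk2

theorem torus_knot_alexander_factorization (p q : ℕ)
    (hp : 2 ≤ p) (hq : 2 ≤ q) (hpq : Nat.Coprime p q) :
    ((X : ℂ[X]) ^ (p * q) - 1) * (X - 1) =
      ((X : ℂ[X]) ^ p - 1) * (X ^ q - 1) *
        ∏ k ∈ Finset.Icc 1 (p - 1), ∏ l ∈ Finset.Icc 1 (q - 1),
          (X - C (Complex.exp
            ((Real.pi * (((p : ℝ) - 2 * k) / p - ((q : ℝ) - 2 * l) / q) : ℝ) * Complex.I))) := by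
  classical
  have hp0 : 0 < p := by omega
  have hq0 : 0 < q := by omega
  set n := p * q with hn
  have hn0 : 0 < n := Nat.mul_pos hp0 hq0
  set ζ : ℂ := Complex.exp (2 * Real.pi * Complex.I / n) with hζdef
  have hζ : IsPrimitiveRoot ζ n := Complex.isPrimitiveRoot_exp n hn0.ne'
  set A : Finset ℕ := (Finset.range n).filter (p ∣ ·) with hA
  set B : Finset ℕ := (Finset.range n).filter (q ∣ ·) with hB
  set T : Finset ℕ := Finset.range n \ (A ∪ B) with hT
  have hABsub : A ∪ B ⊆ Finset.range n := by
    intro x hx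
    rcases Finset.mem_union.1 hx with h | h <;> exact (Finset.mem_filter.1 h).1
  -- A as image
  have hAimg : A = (Finset.range q).image (· * p) := by
    ext m
    simp only [hA, Finset.mem_filter, Finset.mem_range, Finset.mem_image]
    constructor
    · rintro ⟨hm, j, rfl⟩
      refine ⟨j, ?_, mul_comm j p⟩
      rw [hn] at hm
      exact lt_of_mul_lt_mul_left (mul_comm p j ▸ hm) (Nat.zero_le p)
    · rintro ⟨j, hj, rfl⟩
      refine ⟨?_, dvd_mul_left p j⟩
      rw [hn, mul_comm p q]
      exact Nat.mul_lt_mul_of_lt_of_le hj le_rfl hp0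
  have hBimg : B = (Finset.range p).image (· * q) := by
    ext m
    simp only [hB, Finset.mem_filter, Finset.mem_range, Finset.mem_image]
    constructor
    · rintro ⟨hm, j, rfl⟩
      refine ⟨j, ?_, mul_comm j q⟩
      rw [hn, mul_comm p q] at hm
      exact lt_of_mul_lt_mul_left (mul_comm q j ▸ hm) (Nat.zero_le q)
    · rintro ⟨j, hj, rfl⟩
      refine ⟨?_, dvd_mul_left q j⟩
      rw [hn]
      exact Nat.mul_lt_mul_of_lt_of_le hj le_rfl hq0
  -- products over A and B
  have hprodA : ∏ m ∈ A, ((X : ℂ[X]) - C (ζ ^ m)) = X ^ q - 1 := by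
    rw [hAimg, Finset.prod_image (by intro a _ b _ h; exact Nat.eq_of_mul_eq_mul_right hp0 h)]
    rw [prod_range_pow q hq0 (hζ.pow hn0 hn)]
    refine Finset.prod_congr rfl fun j _ => ?_
    rw [← pow_mul, mul_comm]
  have hprodB : ∏ m ∈ B, ((X : ℂ[X]) - C (ζ ^ m)) = X ^ p - 1 := by
    rw [hBimg, Finset.prod_image (by intro a _ b _ h; exact Nat.eq_of_mul_eq_mul_right hq0 h)]
    rw [prod_range_pow p hp0 (hζ.pow hn0 (hn.trans (mul_comm p q)))]
    refine Finset.prod_congr rfl fun j _ => ?_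
    rw [← pow_mul, mul_comm]
  -- intersection
  have hAB : A ∩ B = {0} := by
    ext m
    simp only [hA, hB, Finset.mem_inter, Finset.mem_filter, Finset.mem_range, Finset.mem_singleton]
    constructor
    · rintro ⟨⟨hm, hpm⟩, -, hqm⟩
      have hd : n ∣ m := Nat.Coprime.mul_dvd_of_dvd_of_dvd hpq hpm hqm
      rcases Nat.eq_zero_or_pos m with h | h
      · exact h
      · exact absurd (Nat.le_of_dvd h hd) (by omega)
    · rintro rfl
      exact ⟨⟨hn0, dvd_zero p⟩, hn0, dvd_zero q⟩
  have hpdvdn : p ∣ n := ⟨q, rfl⟩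
  have hqdvdn : q ∣ n := ⟨p, mul_comm p q⟩
  set S : Finset (ℕ × ℕ) := Finset.Icc 1 (p - 1) ×ˢ Finset.Icc 1 (q - 1) with hS
  set e : ℕ × ℕ → ℕ := fun a => (a.2 * p + (p - a.1) * q) % n with he
  -- membership
  have hmem : ∀ a ∈ S, e a ∈ T := by
    rintro ⟨k, l⟩ ha
    simp only [hS, Finset.mem_product, Finset.mem_Icc] at ha
    obtain ⟨⟨hk1, hk2⟩, hl1, hl2⟩ := ha
    set v : ℕ := l * p + (p - k) * q with hv
    have hmlt : v % n < n := Nat.mod_lt _ hn0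
    have hdvd_v_m : ∀ r : ℕ, r ∣ n → (r ∣ v % n ↔ r ∣ v) := by
      intro r hr
      conv_rhs => rw [← Nat.div_add_mod v n]
      rw [Nat.dvd_add_right (hr.mul_right _)]
    simp only [hT, Finset.mem_sdiff, Finset.mem_range, Finset.mem_union, hA, hB,
      Finset.mem_filter, not_or, not_and]
    refine ⟨hmlt, fun _ hpm => ?_, fun _ hqm => ?_⟩
    · have hpv : p ∣ v := (hdvd_v_m p hpdvdn).1 hpm
      have h1 : p ∣ (p - k) * q := (Nat.dvd_add_right (dvd_mul_left p l)).1 (by rwa [hv] at hpv)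
      have h2 : p ∣ p - k := hpq.dvd_of_dvd_mul_right h1
      have := Nat.le_of_dvd (by omega) h2
      omega
    · have hqv : q ∣ v := (hdvd_v_m q hqdvdn).1 hqm
      have h1 : q ∣ l * p := by
        have h0 : q ∣ (p - k) * q := dvd_mul_left q (p - k)
        have := Nat.dvd_sub hqv h0
        rwa [hv, Nat.add_sub_cancel] at this
      have h2 : q ∣ l := hpq.symm.dvd_of_dvd_mul_right h1
      have := Nat.le_of_dvd (by omega) h2
      omega
  -- injectivity
  have hinj : Set.InjOn e S := by
    rintro ⟨k1, l1⟩ h1 ⟨k2, l2⟩ h2 hee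
    simp only [hS, Finset.coe_product, Set.mem_prod, Finset.coe_Icc, Set.mem_Icc] at h1 h2
    obtain ⟨⟨hk11, hk12⟩, hl11, hl12⟩ := h1
    obtain ⟨⟨hk21, hk22⟩, hl21, hl22⟩ := h2
    simp only [he] at hee
    have hk : k1 = k2 := by
      have hc := congrArg (fun x : ℕ => (x : ZMod p)) hee
      rw [cast_mod_zmod hpdvdn, cast_mod_zmod hpdvdn] at hc
      push_cast [Nat.cast_sub (show k1 ≤ p by omega), Nat.cast_sub (show k2 ≤ p by omega)] at hc
      simp only [ZMod.natCast_self, mul_zero, zero_mul, zero_add, zero_sub, neg_mul] at hc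
      exact zmod_cancel_help hp0 hpq.symm (by omega) (by omega) (neg_inj.1 hc)
    have hl : l1 = l2 := by
      have hc := congrArg (fun x : ℕ => (x : ZMod q)) hee
      rw [cast_mod_zmod hqdvdn, cast_mod_zmod hqdvdn] at hc
      push_cast at hc
      simp only [ZMod.natCast_self, mul_zero, zero_mul, add_zero] at hc
      exact zmod_cancel_help hq0 hpq (by omega) (by omega) hc
    simp [hk, hl]
  -- cardinalities
  have hcardA : A.card = q := by
    rw [hAimg, Finset.card_image_of_injOn (fun a _ b _ h => Nat.eq_of_mul_eq_mul_right hp0 h),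
      Finset.card_range]
  have hcardB : B.card = p := by
    rw [hBimg, Finset.card_image_of_injOn (fun a _ b _ h => Nat.eq_of_mul_eq_mul_right hq0 h),
      Finset.card_range]
  have hcardAB : (A ∪ B).card = p + q - 1 := by
    have := Finset.card_union_add_card_inter A B
    rw [hcardA, hcardB, hAB, Finset.card_singleton] at this
    omega
  have hcardT : T.card = n - (p + q - 1) := by
    rw [hT, Finset.card_sdiff_of_subset hABsub, Finset.card_range, hcardAB]
  have hcardS : S.card = (p - 1) * (q - 1) := by
    rw [hS, Finset.card_product, Nat.card_Icc, Nat.card_Icc]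
    congr 1 <;> omega
  have hcard_le : T.card ≤ S.card := by
    rw [hcardT, hcardS]
    obtain ⟨a, rfl⟩ : ∃ a, p = 2 + a := ⟨p - 2, by omega⟩
    obtain ⟨b, rfl⟩ : ∃ b, q = 2 + b := ⟨q - 2, by omega⟩
    have hx : (2 + a) * (2 + b) = (1 + a) * (1 + b) + (a + b + 3) := by ring
    have h1 : 2 + a - 1 = 1 + a := by omega
    have h2 : 2 + b - 1 = 1 + b := by omega
    rw [hn, h1, h2, hx]
    omega
  -- surjectivity
  have himg : S.image e = T :=
    Finset.eq_of_subset_of_card_le (Finset.image_subset_iff.2 hmem)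
      (le_trans hcard_le (le_of_eq (Finset.card_image_of_injOn hinj).symm))
  have hsurj : Set.SurjOn e S T := by
    intro x hx
    rw [← Finset.coe_image, himg]
    exact hx
  -- factor equality
  have hfac : ∀ a ∈ S, ((X : ℂ[X]) - C (Complex.exp
      ((Real.pi * (((p : ℝ) - 2 * a.1) / p - ((q : ℝ) - 2 * a.2) / q) : ℝ) * Complex.I)))
      = X - C (ζ ^ (e a)) := by
    rintro ⟨k, l⟩ ha
    simp only [hS, Finset.mem_product, Finset.mem_Icc] at ha
    obtain ⟨⟨hk1, hk2⟩, hl1, hl2⟩ := ha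
    congr 1
    congr 1
    set v : ℕ := l * p + (p - k) * q with hv
    set d : ℕ := v / n with hdd
    have hdm : n * d + v % n = v := Nat.div_add_mod v n
    have hζm : ζ ^ (v % n) = Complex.exp ((v % n : ℕ) * (2 * Real.pi * Complex.I / n)) := by
      rw [hζdef, ← Complex.exp_nat_mul]
    show Complex.exp _ = ζ ^ (e (k, l))
    simp only [he]
    rw [hζm, Complex.exp_eq_exp_iff_exists_int]
    refine ⟨(d : ℤ) - 1, ?_⟩
    have hpC : (p : ℂ) ≠ 0 := Nat.cast_ne_zero.2 hp0.ne'
    have hqC : (q : ℂ) ≠ 0 := Nat.cast_ne_zero.2 hq0.ne'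
    have hvC : (v : ℂ) = l * p + ((p : ℂ) - k) * q := by
      rw [hv]
      push_cast [Nat.cast_sub (show k ≤ p by omega)]
      ring
    have hmC : ((v % n : ℕ) : ℂ) = l * p + ((p : ℂ) - k) * q - (p * q) * (d : ℂ) := by
      have h3 := congrArg (fun x : ℕ => (x : ℂ)) hdm
      push_cast at h3
      rw [hn] at h3
      push_cast at h3
      linear_combination h3 + hvC
    rw [hmC, hn]
    push_cast
    field_simp
    ring
  -- assembling
  have hFT : (∏ k ∈ Finset.Icc 1 (p - 1), ∏ l ∈ Finset.Icc 1 (q - 1),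
      ((X : ℂ[X]) - C (Complex.exp
        ((Real.pi * (((p : ℝ) - 2 * k) / p - ((q : ℝ) - 2 * l) / q) : ℝ) * Complex.I))))
      = ∏ m ∈ T, (X - C (ζ ^ m)) := by
    rw [← Finset.prod_product']
    exact Finset.prod_nbij e hmem hinj hsurj hfac
  rw [hFT]
  have hsplit : Finset.range n = (A ∪ B) ∪ T := (Finset.union_sdiff_of_subset hABsub).symm
  have hdisj : Disjoint (A ∪ B) T := Finset.disjoint_sdiff
  have hX1 : ∏ m ∈ A ∩ B, ((X : ℂ[X]) - C (ζ ^ m)) = X - 1 := by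
    rw [hAB, Finset.prod_singleton, pow_zero, map_one]
  have hUI := Finset.prod_union_inter (s₁ := A) (s₂ := B) (f := fun m => (X : ℂ[X]) - C (ζ ^ m))
  rw [hX1, hprodA, hprodB] at hUI
  calc ((X : ℂ[X]) ^ n - 1) * (X - 1)
      = ((∏ m ∈ A ∪ B, ((X : ℂ[X]) - C (ζ ^ m))) * (X - 1)) * ∏ m ∈ T, (X - C (ζ ^ m)) := by
        rw [prod_range_pow n hn0 hζ, hsplit, Finset.prod_union hdisj]; ring
    _ = ((X ^ q - 1) * (X ^ p - 1)) * ∏ m ∈ T, (X - C (ζ ^ m)) := by rw [hUI]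
    _ = (X ^ p - 1) * (X ^ q - 1) * ∏ m ∈ T, (X - C (ζ ^ m)) := by ring
end

section
/- Let p, q ≥ 2 be coprime integers. Then the (p − 1)(q − 1) complex numbers exp(iθ(p,k;q,l)) with 1 ≤ k ≤ p − 1 and 1 ≤ l ≤ q − 1 are mutually distinct; that is, the map (k, l) ↦ exp(i·π·((p − 2k)/p − (q − 2l)/q)) is injective on {1, …, p − 1} × {1, …, q − 1}. -/
open Complex

theorem torus_knot_roots_distinct (p q : ℕ)
    (hp : 2 ≤ p) (hq : 2 ≤ q) (hpq : Nat.Coprime p q) :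
    Set.InjOn
      (fun kl : ℕ × ℕ => Complex.exp
        ((Real.pi * (((p : ℝ) - 2 * kl.1) / p - ((q : ℝ) - 2 * kl.2) / q) : ℝ) * Complex.I))
      (Set.Icc 1 (p - 1) ×ˢ Set.Icc 1 (q - 1)) := by
  rintro ⟨k, l⟩ ⟨⟨hk1, hk2⟩, hl1, hl2⟩ ⟨k', l'⟩ ⟨⟨hk1', hk2'⟩, hl1', hl2'⟩ h
  simp only at h
  rw [Complex.exp_eq_exp_iff_exists_int] at h
  obtain ⟨n, hn⟩ := h
  have him := congrArg Complex.im hn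
  simp [Complex.add_im, Complex.mul_im] at him
  -- him : real equation
  have hp0 : (p : ℝ) ≠ 0 := by positivity
  have hq0 : (q : ℝ) ≠ 0 := by positivity
  have hπ : Real.pi ≠ 0 := Real.pi_ne_zero
  have hA : ((p : ℝ) - 2 * k) / p - ((q : ℝ) - 2 * l) / q
      = ((p : ℝ) - 2 * k') / p - ((q : ℝ) - 2 * l') / q + 2 * n := by
    have := him
    field_simp at this ⊢
    nlinarith [Real.pi_pos]
  have hint : (q : ℤ) * (k' - k) + p * ((l : ℤ) - l') = n * p * q := by
    have : ((q : ℝ)) * ((k' : ℝ) - k) + (p : ℝ) * ((l : ℝ) - l') = n * p * q := by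
      field_simp at hA
      nlinarith
    exact_mod_cast this
  have hpk : (p : ℤ) ∣ (k' : ℤ) - k := by
    have h1 : (p : ℤ) ∣ (q : ℤ) * ((k' : ℤ) - k) := by
      refine ⟨n * q - ((l : ℤ) - l'), by linarith [hint]⟩
    have hco : IsCoprime (p : ℤ) (q : ℤ) := Int.isCoprime_iff_gcd_eq_one.mpr hpq
    exact hco.dvd_of_dvd_mul_left h1
  have hkp : k < p := by omega
  have hkp' : k' < p := by omega
  have hlq : l < q := by omega
  have hlq' : l' < q := by omega
  have hkk : (k' : ℤ) = k := by
    have := Int.eq_zero_of_abs_lt_dvd hpk (by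
      rw [abs_sub_lt_iff]; constructor <;> omega)
    omega
  have hll : (l : ℤ) = l' := by
    have hpz : (p : ℤ) ≠ 0 := by positivity
    have h2 : (p : ℤ) * ((l : ℤ) - l') = p * (n * q) := by
      rw [hkk] at hint; ring_nf; ring_nf at hint; linarith
    have h3 : (l : ℤ) - l' = n * q := mul_left_cancel₀ hpz h2
    have := Int.eq_zero_of_abs_lt_dvd ⟨n, by linarith⟩ (show |(l:ℤ) - l'| < q by
      rw [abs_sub_lt_iff]; constructor <;> omega)
    omega
  have : k = k' := by omega
  have : l = l' := by omega
  simp_all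
end
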